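/- arXiv:2402.19232 — 2 statements merged into one kernel-verified Lean document; each statement's English description precedes it below -/
import Mathlib

section
/- If the DRP instance I(φ) associated with a 3-SAT instance φ (with |L| ≥ 2 clauses over V variables) admits a feasible solution, then φ is satisfiable. -/
/-- A decision tree over `M` binary attributes: a finite rooted full binary tree
whose internal nodes carry attribute labels in `Fin M`. -/
inductive DTree (M : ℕ) : Type where
  | leaf : DTree M
  | node (f : Fin M) (l r : DTree M) : DTree M

namespace DTree

/-- The leaves of a decision tree, identified by their root-to-leaf paths
(`false` = left branch, i.e. attribute value 0; `true` = right branch, i.e. value 1). -/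
def leaves {M : ℕ} : DTree M → Finset (List Bool)
  | .leaf => {[]}
  | .node _ l r => (l.leaves.image (List.cons false)) ∪ (r.leaves.image (List.cons true))

/-- `Φ⁺(v)`: the attributes forced to value 1 on the root-to-`v` path. -/
def phiPos {M : ℕ} : DTree M → List Bool → Finset (Fin M)
  | .node f _ r, true :: p => insert f (r.phiPos p)
  | .node _ l _, false :: p => l.phiPos p
  | _, _ => ∅

/-- `Φ⁻(v)`: the attributes forced to value 0 on the root-to-`v` path. -/
def phiNeg {M : ℕ} : DTree M → List Bool → Finset (Fin M)
  | .node f l _, false :: p => insert f (l.phiNeg p)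
  | .node _ _ r, true :: p => r.phiNeg p
  | _, _ => ∅

end DTree

/-- A DRP (dataset reconstruction problem) instance: a finite forest of decision
trees over `M` binary attributes, counts `n_{t,v,c}` for every tree `t`, node `v`
(identified by its path) and class `c : C`, and a set `B ⊆ ℕ`. -/
structure DRP (C : Type) (N M : ℕ) where
  numTrees : ℕ
  tree : Fin numTrees → DTree M
  count : Fin numTrees → List Bool → C → ℕ
  B : Set ℕ

/-- Feasibility of a solution `(x, z, y)` of a DRP instance. -/
def IsFeasible {C : Type} [DecidableEq C] {N M : ℕ} (D : DRP C N M)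
    (x : Fin N → Fin M → Bool) (z : Fin N → C)
    (y : Fin D.numTrees → List Bool → Fin N → ℕ) : Prop :=
  (∀ t (k : Fin N), (∑ v ∈ (D.tree t).leaves, y t v k) ∈ D.B) ∧
  (∀ t, ∀ v ∈ (D.tree t).leaves, ∀ c : C,
      (∑ k ∈ Finset.univ.filter (fun k : Fin N => z k = c), y t v k) = D.count t v c) ∧
  (∀ t, ∀ v ∈ (D.tree t).leaves, ∀ k : Fin N, 0 < y t v k →
      (∀ i ∈ (D.tree t).phiPos v, x k i = true) ∧
      (∀ i ∈ (D.tree t).phiNeg v, x k i = false))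

/-- A literal over `V` boolean variables: a variable index together with a polarity
(`true` = the variable itself, `false` = its negation). -/
abbrev Lit (V : ℕ) := Fin V × Bool

/-- A 3-clause: a disjunction of three literals. -/
abbrev Clause3 (V : ℕ) := Lit V × Lit V × Lit V

/-- A 3-SAT instance over `V` variables: a finite list of 3-clauses. -/
abbrev CNF3 (V : ℕ) := List (Clause3 V)

def litSat {V : ℕ} (u : Fin V → Bool) (l : Lit V) : Prop := u l.1 = l.2

def clauseSat {V : ℕ} (u : Fin V → Bool) (cl : Clause3 V) : Prop :=
  litSat u cl.1 ∨ litSat u cl.2.1 ∨ litSat u cl.2.2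

/-- Satisfiability of a 3-SAT instance. -/
def Satisfiable {V : ℕ} (φ : CNF3 V) : Prop := ∃ u : Fin V → Bool, ∀ cl ∈ φ, clauseSat u cl

/-- Attribute `j ∈ {1,…,V}` among the `V + L` attributes of the construction. -/
def varAttr {V : ℕ} (L : ℕ) (j : Fin V) : Fin (V + L) := Fin.castAdd L j

/-- Attribute `V + l` among the `V + L` attributes of the construction. -/
def clauseAttr {V : ℕ} (L : ℕ) (l : Fin L) : Fin (V + L) := Fin.natAdd V l

/-- Perfect binary tree of depth 3 branching successively on attributes `a`, `b`, `c`. -/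
def perfect3 {M : ℕ} (a b c : Fin M) : DTree M :=
  .node a
    (.node b (.node c .leaf .leaf) (.node c .leaf .leaf))
    (.node b (.node c .leaf .leaf) (.node c .leaf .leaf))

/-- The tree associated with clause `l`: the root branches on attribute `V + l`, its left
child is a leaf, and its right subtree is a perfect binary tree of depth 3 branching
successively on the three variables of the clause. -/
def clauseTree {V : ℕ} (L : ℕ) (l : Fin L) (cl : Clause3 V) : DTree (V + L) :=
  .node (clauseAttr L l) .leaf
    (perfect3 (varAttr L cl.1.1) (varAttr L cl.2.1.1) (varAttr L cl.2.2.1))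

/-- Counts for the tree of clause `cl`: the left leaf carries `6|L| - 6`; the eight leaves
of the perfect subtree correspond to the eight 0/1 assignments of the clause's variables
and carry 1 if the assignment satisfies the clause, 0 otherwise. -/
def clauseCount {V : ℕ} (L : ℕ) (cl : Clause3 V) : List Bool → ℕ
  | [false] => 6 * L - 6
  | [true, b1, b2, b3] =>
      if b1 = cl.1.2 ∨ b2 = cl.2.1.2 ∨ b3 = cl.2.2.2 then 1 else 0
  | _ => 0

/-- A right chain: each listed attribute gives an internal node on the rightmost path
whose left child is a leaf. -/
def rightChain {M : ℕ} : List (Fin M) → DTree M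
  | [] => .leaf
  | f :: fs => .node f .leaf (rightChain fs)

/-- The auxiliary tree: its right path has, at each depth `d ∈ {0,…,L-1}`, an internal
node branching on attribute `V + d + 1`. -/
def auxTree (V L : ℕ) : DTree (V + L) :=
  rightChain ((List.finRange L).map (clauseAttr L))

/-- Counts for the auxiliary tree: the left leaf at depth 1 carries `6L - 6`, the left
leaf at depth 2 carries `6`, the other left leaves carry `0`, and the rightmost leaf
(at depth `L`) carries `1`. -/
def auxCount (L : ℕ) (p : List Bool) : ℕ :=
  if p = [false] then 6 * L - 6
  else if p = [true, false] then 6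
  else if p = List.replicate L true then 1
  else 0

/-- The DRP instance `I(φ)` associated with a 3-SAT instance `φ`: a single class,
`N = 6|L| + 1` examples, `M = V + |L|` binary attributes, `B = {1}`, one tree per
clause plus the auxiliary tree. -/
def drpOf {V : ℕ} (φ : CNF3 V) : DRP Unit (6 * φ.length + 1) (V + φ.length) where
  numTrees := φ.length + 1
  tree := fun t =>
    if h : (t : ℕ) < φ.length then clauseTree φ.length ⟨t, h⟩ (φ.get ⟨t, h⟩)
    else auxTree V φ.length
  count := fun t p _ =>
    if h : (t : ℕ) < φ.length then clauseCount φ.length (φ.get ⟨t, h⟩) p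
    else auxCount φ.length p
  B := {1}

lemma rightChain_leaves_replicate {M : ℕ} (fs : List (Fin M)) :
    List.replicate fs.length true ∈ (rightChain fs).leaves := by
  induction fs with
  | nil => simp [rightChain, DTree.leaves]
  | cons f fs ih =>
      simp only [rightChain, DTree.leaves, List.length_cons, List.replicate_succ,
        Finset.mem_union, Finset.mem_image]
      exact Or.inr ⟨_, ih, rfl⟩

lemma rightChain_phiPos {M : ℕ} (fs : List (Fin M)) (f : Fin M) (hf : f ∈ fs) :
    f ∈ (rightChain fs).phiPos (List.replicate fs.length true) := by
  induction fs with
  | nil => simp at hf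
  | cons g fs ih =>
      simp only [rightChain, List.length_cons, List.replicate_succ, DTree.phiPos,
        Finset.mem_insert]
      rcases List.mem_cons.mp hf with h | h
      · exact Or.inl h
      · exact Or.inr (ih h)

lemma mem_leaves_clauseTree {V : ℕ} {L : ℕ} {l : Fin L} {cl : Clause3 V} {v : List Bool}
    (hv : v ∈ (clauseTree L l cl).leaves) :
    v = [false] ∨ ∃ b1 b2 b3, v = [true, b1, b2, b3] := by
  simp only [clauseTree, perfect3, DTree.leaves, Finset.mem_union, Finset.mem_image,
    Finset.mem_singleton] at hv
  rcases hv with ⟨a, rfl, rfl⟩ | h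
  · exact Or.inl rfl
  · right
    aesop

lemma perfect3_force {M : ℕ} (a b c : Fin M) (b1 b2 b3 : Bool) (x : Fin M → Bool)
    (hp : ∀ i ∈ (perfect3 a b c).phiPos [b1, b2, b3], x i = true)
    (hn : ∀ i ∈ (perfect3 a b c).phiNeg [b1, b2, b3], x i = false) :
    x a = b1 ∧ x b = b2 ∧ x c = b3 := by
  cases b1 <;> cases b2 <;> cases b3 <;>
    simp only [perfect3, DTree.phiPos, DTree.phiNeg, Finset.mem_insert,
      Finset.mem_singleton, Finset.notMem_empty, LawfulSingleton.insert_empty_eq] at hp hn <;>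
    refine ⟨?_, ?_, ?_⟩ <;> first
      | (apply hp; tauto) | (apply hn; tauto)

lemma clauseTree_phiNeg_false {V L : ℕ} (l : Fin L) (cl : Clause3 V) :
    clauseAttr L l ∈ (clauseTree L l cl).phiNeg [false] := by
  simp [clauseTree, DTree.phiNeg]


/-- If the DRP instance `I(φ)` associated with a 3-SAT instance `φ` (with `|L| ≥ 2`
clauses over `V` variables) admits a feasible solution, then `φ` is satisfiable. -/
theorem satisfiable_of_drpOf_feasible {V : ℕ} (φ : CNF3 V) (hL : 2 ≤ φ.length)
    (x : Fin (6 * φ.length + 1) → Fin (V + φ.length) → Bool)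
    (z : Fin (6 * φ.length + 1) → Unit)
    (y : Fin (drpOf φ).numTrees → List Bool → Fin (6 * φ.length + 1) → ℕ)
    (hfeas : IsFeasible (drpOf φ) x z y) :
    Satisfiable φ := by
  classical
  obtain ⟨hB, hcount, hforce⟩ := hfeas
  have hfilter : (Finset.univ.filter (fun k : Fin (6 * φ.length + 1) => z k = ()))
      = Finset.univ := Finset.filter_true_of_mem (fun k _ => by cases z k; rfl)
  -- the auxiliary tree
  have hLlt : φ.length < φ.length + 1 := Nat.lt_succ_self _
  have hta_tree : (drpOf φ).tree ⟨φ.length, hLlt⟩ = auxTree V φ.length := by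
    show (if h : φ.length < φ.length then _ else _) = _
    rw [dif_neg (lt_irrefl _)]
  have hta_count : ∀ p, (drpOf φ).count ⟨φ.length, hLlt⟩ p () = auxCount φ.length p := by
    intro p
    show (if h : φ.length < φ.length then _ else _) = _
    rw [dif_neg (lt_irrefl _)]
  have hlen : ((List.finRange φ.length).map (clauseAttr (V := V) φ.length)).length
      = φ.length := by simp
  have hmem : List.replicate φ.length true ∈ (auxTree V φ.length).leaves := by
    have := rightChain_leaves_replicate ((List.finRange φ.length).map (clauseAttr (V := V) φ.length))
    rw [hlen] at this
    exact this
  have hone : auxCount φ.length (List.replicate φ.length true) = 1 := by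
    obtain ⟨n, hn⟩ : ∃ n, φ.length = n + 2 := ⟨φ.length - 2, by omega⟩
    have h1 : List.replicate φ.length true ≠ [false] := by
      rw [hn]; simp [List.replicate_succ]
    have h2 : List.replicate φ.length true ≠ [true, false] := by
      rw [hn]; simp [List.replicate_succ]
    simp [auxCount, h1, h2]
  have hsum : (∑ k, y ⟨φ.length, hLlt⟩ (List.replicate φ.length true) k) = 1 := by
    have h := hcount ⟨φ.length, hLlt⟩ (List.replicate φ.length true)
      (by rw [hta_tree]; exact hmem) ()
    rw [hfilter, hta_count, hone] at h
    exact h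
  obtain ⟨k, -, hk⟩ := Finset.exists_ne_zero_of_sum_ne_zero
    (by rw [hsum]; exact one_ne_zero :
      (∑ k ∈ Finset.univ, y ⟨φ.length, hLlt⟩ (List.replicate φ.length true) k) ≠ 0)
  -- k is forced to have all clause attributes set to true
  have hxk : ∀ l : Fin φ.length, x k (clauseAttr φ.length l) = true := by
    intro l
    have hf := hforce ⟨φ.length, hLlt⟩ (List.replicate φ.length true)
      (by rw [hta_tree]; exact hmem) k (Nat.pos_of_ne_zero hk)
    apply hf.1
    rw [hta_tree]
    have hmem' : clauseAttr (V := V) φ.length l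
        ∈ (List.finRange φ.length).map (clauseAttr (V := V) φ.length) :=
      List.mem_map_of_mem (List.mem_finRange l)
    have := rightChain_phiPos _ _ hmem'
    rw [hlen] at this
    exact this
  -- the satisfying assignment
  refine ⟨fun j => x k (varAttr φ.length j), ?_⟩
  intro cl hcl
  obtain ⟨i, hi⟩ := List.mem_iff_get.mp hcl
  have hilt : (i : ℕ) < φ.length + 1 := by omega
  have htree : (drpOf φ).tree ⟨i, hilt⟩ = clauseTree φ.length i cl := by
    show (if h : (i : ℕ) < φ.length then _ else _) = _
    rw [dif_pos i.isLt]
    rw [← hi, List.get_eq_getElem]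
  have hcnt : ∀ p, (drpOf φ).count ⟨i, hilt⟩ p () = clauseCount φ.length cl p := by
    intro p
    show (if h : (i : ℕ) < φ.length then _ else _) = _
    rw [dif_pos i.isLt]
    rw [← hi, List.get_eq_getElem]
  -- k lands on some leaf of the clause tree
  have hBk : (∑ v ∈ (clauseTree φ.length i cl).leaves, y ⟨i, hilt⟩ v k) = 1 := by
    have h := hB ⟨i, hilt⟩ k
    rw [htree] at h
    exact h
  obtain ⟨v, hvmem, hvne⟩ := Finset.exists_ne_zero_of_sum_ne_zero
    (by rw [hBk]; exact one_ne_zero)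
  have hvforce := hforce ⟨i, hilt⟩ v (by rw [htree]; exact hvmem) k (Nat.pos_of_ne_zero hvne)
  rw [htree] at hvforce
  rcases mem_leaves_clauseTree hvmem with rfl | ⟨b1, b2, b3, rfl⟩
  · -- impossible: k has the clause attribute set to true
    have := hvforce.2 _ (clauseTree_phiNeg_false i cl)
    rw [hxk i] at this
    exact absurd this (by simp)
  · -- the leaf assignment satisfies the clause
    have hxv : x k (varAttr φ.length cl.1.1) = b1 ∧ x k (varAttr φ.length cl.2.1.1) = b2 ∧
        x k (varAttr φ.length cl.2.2.1) = b3 := by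
      apply perfect3_force
      · intro j hj
        apply hvforce.1
        simp only [clauseTree, DTree.phiPos, Finset.mem_insert]
        exact Or.inr hj
      · intro j hj
        apply hvforce.2
        simpa only [clauseTree, DTree.phiNeg] using hj
    have hcpos : clauseCount φ.length cl [true, b1, b2, b3] ≠ 0 := by
      have h := hcount ⟨i, hilt⟩ [true, b1, b2, b3] (by rw [htree]; exact hvmem) ()
      rw [hfilter, hcnt] at h
      rw [← h]
      intro h0
      have hle : y ⟨i, hilt⟩ [true, b1, b2, b3] k
          ≤ ∑ k' ∈ Finset.univ, y ⟨i, hilt⟩ [true, b1, b2, b3] k' :=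
        Finset.single_le_sum (fun _ _ => Nat.zero_le _) (Finset.mem_univ k)
      omega
    have hcond : b1 = cl.1.2 ∨ b2 = cl.2.1.2 ∨ b3 = cl.2.2.2 := by
      by_contra hc
      exact hcpos (by rw [show clauseCount φ.length cl [true, b1, b2, b3]
        = if b1 = cl.1.2 ∨ b2 = cl.2.1.2 ∨ b3 = cl.2.2.2 then 1 else 0 from rfl, if_neg hc])
    rcases hcond with h | h | h
    · exact Or.inl (by rw [litSat]; rw [hxv.1, h])
    · exact Or.inr (Or.inl (by rw [litSat]; rw [hxv.2.1, h]))
    · exact Or.inr (Or.inr (by rw [litSat]; rw [hxv.2.2, h]))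
end

section
/- Let T be a finite rooted full binary tree. Suppose given λ_d ∈ {0,1} for every depth d at which T has internal nodes, and real numbers y_v ≥ 0 for all nodes v of T such that: y_root = 1; y_v = y_{l(v)} + y_{r(v)} for every internal node v; and for every depth d, Σ_{v internal at depth d} y_{l(v)} ≤ λ_d and Σ_{v internal at depth d} y_{r(v)} ≤ 1 − λ_d. Then y_v ∈ {0,1} for every node v, and exactly one leaf v of T has y_v = 1 (all other leaves have y_v = 0). -/
/-- A finite rooted full binary tree: every internal node has exactly two children. -/
inductive BTree : Type where
  | leaf : BTree
  | node (l r : BTree) : BTree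

namespace BTree

/-- All nodes of the tree, identified by their root-to-node paths
(`false` = left, `true` = right); the depth of a node is the length of its path. -/
def nodes : BTree → Finset (List Bool)
  | .leaf => {[]}
  | .node l r =>
      insert [] ((l.nodes.image (List.cons false)) ∪ (r.nodes.image (List.cons true)))

/-- The leaves of the tree, identified by their root-to-leaf paths. -/
def leaves : BTree → Finset (List Bool)
  | .leaf => {[]}
  | .node l r => (l.leaves.image (List.cons false)) ∪ (r.leaves.image (List.cons true))

/-- The subtree rooted at the node reached by path `p` (if any). -/
def subtree? : BTree → List Bool → Option BTree
  | T, [] => some T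
  | .node l _, false :: p => l.subtree? p
  | .node _ r, true :: p => r.subtree? p
  | .leaf, _ :: _ => none

/-- Whether the node of `T` at path `p` exists and is internal. -/
def internalAt (T : BTree) (p : List Bool) : Bool :=
  match T.subtree? p with
  | some (.node _ _) => true
  | _ => false

end BTree

namespace BTreeAux
open BTree

lemma mem_nodes_iff : ∀ (T : BTree) (p : List Bool), p ∈ T.nodes ↔ (T.subtree? p).isSome
  | .leaf, [] => by simp [nodes, subtree?]
  | .leaf, b :: p => by simp [nodes, subtree?]
  | .node l r, [] => by simp [nodes, subtree?]
  | .node l r, false :: p => by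
      simp [nodes, subtree?, mem_nodes_iff l p]
  | .node l r, true :: p => by
      simp [nodes, subtree?, mem_nodes_iff r p]

lemma mem_leaves_iff : ∀ (T : BTree) (p : List Bool), p ∈ T.leaves ↔ T.subtree? p = some .leaf
  | .leaf, [] => by simp [leaves, subtree?]
  | .leaf, b :: p => by simp [leaves, subtree?]
  | .node l r, [] => by simp [leaves, subtree?]
  | .node l r, false :: p => by
      simp [leaves, subtree?, mem_leaves_iff l p]
  | .node l r, true :: p => by
      simp [leaves, subtree?, mem_leaves_iff r p]

lemma internalAt_iff (T : BTree) (p : List Bool) :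
    T.internalAt p = true ↔ ∃ a b, T.subtree? p = some (.node a b) := by
  unfold internalAt
  rcases h : T.subtree? p with _ | t
  · simp
  · cases t <;> simp

lemma subtree?_append : ∀ (T : BTree) (p q : List Bool),
    T.subtree? (p ++ q) = (T.subtree? p).bind (fun t => t.subtree? q)
  | T, [], q => by simp [subtree?]
  | .leaf, b :: p, q => by simp [subtree?]
  | .node l r, false :: p, q => by simp [subtree?, subtree?_append l p q]
  | .node l r, true :: p, q => by simp [subtree?, subtree?_append r p q]

lemma child_mem_nodes {T : BTree} {p : List Bool} (hp : p ∈ T.nodes)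
    (hint : T.internalAt p = true) (b : Bool) : p ++ [b] ∈ T.nodes := by
  obtain ⟨a, c, h⟩ := (internalAt_iff T p).1 hint
  rw [mem_nodes_iff, subtree?_append, h]
  cases b <;> simp [subtree?]

lemma parent_of_mem {T : BTree} {p : List Bool} {b : Bool} (h : p ++ [b] ∈ T.nodes) :
    p ∈ T.nodes ∧ T.internalAt p = true := by
  rw [mem_nodes_iff, subtree?_append] at h
  rcases hs : T.subtree? p with _ | t
  · rw [hs] at h; simp at h
  · rw [hs] at h
    cases t with
    | leaf => cases b <;> simp [subtree?] at h
    | node a c =>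
        exact ⟨(mem_nodes_iff T p).2 (by simp [hs]), (internalAt_iff T p).2 ⟨a, c, hs⟩⟩

lemma leaf_of_not_internal {T : BTree} {p : List Bool} (hp : p ∈ T.nodes)
    (h : T.internalAt p = false) : p ∈ T.leaves := by
  rw [mem_nodes_iff] at hp
  rcases hs : T.subtree? p with _ | t
  · rw [hs] at hp; simp at hp
  · cases t with
    | leaf => exact (mem_leaves_iff T p).2 hs
    | node a c =>
        exact absurd ((internalAt_iff T p).2 ⟨a, c, hs⟩) (by simp [h])

lemma not_internal_of_leaf {T : BTree} {p : List Bool} (hp : p ∈ T.leaves) :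
    T.internalAt p = false := by
  rw [mem_leaves_iff] at hp
  unfold internalAt
  rw [hp]

lemma leaves_subset_nodes {T : BTree} {p : List Bool} (hp : p ∈ T.leaves) : p ∈ T.nodes := by
  rw [mem_leaves_iff] at hp
  rw [mem_nodes_iff, hp]
  simp

def height : BTree → ℕ
  | .leaf => 0
  | .node l r => max (height l) (height r) + 1

lemma length_le_height : ∀ {T : BTree} {p : List Bool}, p ∈ T.nodes → p.length ≤ height T
  | .leaf, p, h => by simp [nodes] at h; simp [h, height]
  | .node l r, [], h => by simp
  | .node l r, false :: p, h => by
      simp only [nodes, Finset.mem_insert, Finset.mem_union, Finset.mem_image] at h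
      rcases h with h | ⟨q, hq, hq2⟩ | ⟨q, hq, hq2⟩
      · exact absurd h (by simp)
      · injection hq2 with _ h2; subst h2
        have := length_le_height hq
        simp only [height, List.length_cons]
        omega
      · exact absurd hq2 (by simp)
  | .node l r, true :: p, h => by
      simp only [nodes, Finset.mem_insert, Finset.mem_union, Finset.mem_image] at h
      rcases h with h | ⟨q, hq, hq2⟩ | ⟨q, hq, hq2⟩
      · exact absurd h (by simp)
      · exact absurd hq2 (by simp)
      · injection hq2 with _ h2; subst h2
        have := length_le_height hq
        simp only [height, List.length_cons]
        omega

lemma root_mem_nodes (T : BTree) : [] ∈ T.nodes := by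
  rw [mem_nodes_iff]; simp [subtree?]

end BTreeAux

namespace BTreeAux
open BTree

def frontier (T : BTree) (d : ℕ) : Finset (List Bool) :=
  T.nodes.filter (fun p => p.length = d ∨ (p.length < d ∧ T.internalAt p = false))

lemma mem_frontier_succ {T : BTree} {d : ℕ} {p : List Bool} :
    p ∈ frontier T (d+1) ↔
    (p ∈ frontier T d ∧ ¬(p.length = d ∧ T.internalAt p = true)) ∨
    (∃ q b, q ∈ T.nodes ∧ q.length = d ∧ T.internalAt q = true ∧ p = q ++ [b]) := by
  simp only [frontier, Finset.mem_filter]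
  constructor
  · rintro ⟨hp, hlen | ⟨hlt, hni⟩⟩
    · have hne : p ≠ [] := by intro h; subst h; simp at hlen
      have hdec : p.dropLast ++ [p.getLast hne] = p := List.dropLast_append_getLast hne
      rw [← hdec] at hp
      obtain ⟨hq, hqi⟩ := parent_of_mem hp
      refine Or.inr ⟨p.dropLast, p.getLast hne, hq, ?_, hqi, hdec.symm⟩
      have : p.dropLast.length = p.length - 1 := List.length_dropLast
      omega
    · left
      refine ⟨⟨hp, ?_⟩, ?_⟩
      · rcases Nat.lt_succ_iff_lt_or_eq.1 hlt with h | h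
        · exact Or.inr ⟨h, hni⟩
        · exact Or.inl h
      · rintro ⟨-, hi⟩
        rw [hi] at hni
        exact absurd hni (by simp)
  · rintro (⟨⟨hp, hcase⟩, hnot⟩ | ⟨q, b, hq, hlen, hint, rfl⟩)
    · refine ⟨hp, Or.inr ?_⟩
      rcases hcase with h | ⟨h1, h2⟩
      · refine ⟨by omega, ?_⟩
        cases hI : T.internalAt p
        · rfl
        · exact absurd ⟨h, hI⟩ hnot
      · exact ⟨by omega, h2⟩
    · refine ⟨child_mem_nodes hq hint b, Or.inl ?_⟩
      simp [hlen]

end BTreeAux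


open BTreeAux

/-- Integrality of the MILP flow: if `λ_d ∈ {0,1}` at every depth `d` carrying internal
nodes, `y ≥ 0` on all nodes, `y(root) = 1`, `y(v) = y(l(v)) + y(r(v))` at every internal
node, and at each depth `d` the left (resp. right) children of internal nodes carry total
flow at most `λ_d` (resp. `1 - λ_d`), then `y` is 0/1 on every node and exactly one leaf
carries `y = 1` (all other leaves carry `y = 0`). -/
theorem flow_integrality (T : BTree) (lam : ℕ → ℝ) (y : List Bool → ℝ)
    (hlam : ∀ d : ℕ, (∃ p ∈ T.nodes, p.length = d ∧ T.internalAt p = true) →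
      lam d = 0 ∨ lam d = 1)
    (hnonneg : ∀ p ∈ T.nodes, 0 ≤ y p)
    (hroot : y [] = 1)
    (hflow : ∀ p ∈ T.nodes, T.internalAt p = true →
      y p = y (p ++ [false]) + y (p ++ [true]))
    (hleft : ∀ d : ℕ,
      (∑ p ∈ T.nodes.filter (fun p => p.length = d ∧ T.internalAt p = true),
        y (p ++ [false])) ≤ lam d)
    (hright : ∀ d : ℕ,
      (∑ p ∈ T.nodes.filter (fun p => p.length = d ∧ T.internalAt p = true),
        y (p ++ [true])) ≤ 1 - lam d) :
    (∀ p ∈ T.nodes, y p = 0 ∨ y p = 1) ∧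
    (∃! v : List Bool, v ∈ T.leaves ∧ y v = 1) := by
  -- zero flow propagates to children
  have hzero : ∀ q ∈ T.nodes, T.internalAt q = true → y q = 0 → ∀ b, y (q ++ [b]) = 0 := by
    intro q hq hint h0 b
    have hfl := hflow q hq hint
    rw [h0] at hfl
    have h1 := hnonneg _ (child_mem_nodes hq hint false)
    have h2 := hnonneg _ (child_mem_nodes hq hint true)
    cases b <;> linarith
  -- key invariant: at each depth, the frontier carries a unique unit of flow
  have key : ∀ d, ∃ v, v ∈ frontier T d ∧ y v = 1 ∧
      ∀ w ∈ frontier T d, w ≠ v → y w = 0 := by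
    intro d
    induction d with
    | zero =>
      refine ⟨[], ?_, hroot, ?_⟩
      · exact Finset.mem_filter.2 ⟨root_mem_nodes T, Or.inl rfl⟩
      · intro w hw hne
        rcases (Finset.mem_filter.1 hw).2 with h | ⟨h, -⟩
        · exact absurd (List.eq_nil_of_length_eq_zero h) hne
        · omega
    | succ d ih =>
      obtain ⟨v, hv, hv1, huniq⟩ := ih
      have hvnodes : v ∈ T.nodes := (Finset.mem_filter.1 hv).1
      by_cases hint : v.length = d ∧ T.internalAt v = true
      · obtain ⟨hvlen, hvint⟩ := hint
        have hlam01 := hlam d ⟨v, hvnodes, hvlen, hvint⟩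
        have hvI : v ∈ T.nodes.filter (fun p => p.length = d ∧ T.internalAt p = true) :=
          Finset.mem_filter.2 ⟨hvnodes, hvlen, hvint⟩
        have hlb : ∀ b : Bool,
            y (v ++ [b]) ≤ ∑ p ∈ T.nodes.filter
              (fun p => p.length = d ∧ T.internalAt p = true), y (p ++ [b]) := by
          intro b
          refine Finset.single_le_sum (f := fun p => y (p ++ [b])) (fun p hp => ?_) hvI
          have hp' := Finset.mem_filter.1 hp
          exact hnonneg _ (child_mem_nodes hp'.1 hp'.2.2 b)
        have hfl := hflow v hvnodes hvint
        rw [hv1] at hfl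
        have hnl := hnonneg _ (child_mem_nodes hvnodes hvint false)
        have hnr := hnonneg _ (child_mem_nodes hvnodes hvint true)
        have hkey : ∃ b : Bool, y (v ++ [b]) = 1 ∧ y (v ++ [!b]) = 0 := by
          rcases hlam01 with h0 | h1
          · have hl0 : y (v ++ [false]) = 0 := by
              have := (hlb false).trans (hleft d)
              linarith
            exact ⟨true, by simpa using by linarith, by simpa using hl0⟩
          · have hr0 : y (v ++ [true]) = 0 := by
              have := (hlb true).trans (hright d)
              linarith
            exact ⟨false, by linarith, by simpa using hr0⟩
        obtain ⟨b, hb1, hb0⟩ := hkey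
        refine ⟨v ++ [b], ?_, hb1, ?_⟩
        · exact mem_frontier_succ.2 (Or.inr ⟨v, b, hvnodes, hvlen, hvint, rfl⟩)
        · intro w hw hne
          rcases mem_frontier_succ.1 hw with ⟨hwf, hwn⟩ | ⟨q, b', hq, hqlen, hqint, rfl⟩
          · refine huniq w hwf (fun h => ?_)
            subst h
            exact hwn ⟨hvlen, hvint⟩
          · by_cases hqv : q = v
            · subst hqv
              have : b' = !b := by
                cases b <;> cases b' <;> first | decide | exact absurd rfl hne
              rw [this]
              exact hb0
            · have hq0 : y q = 0 :=
                huniq q (Finset.mem_filter.2 ⟨hq, Or.inl hqlen⟩) hqv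
              exact hzero q hq hqint hq0 b'
      · refine ⟨v, mem_frontier_succ.2 (Or.inl ⟨hv, hint⟩), hv1, ?_⟩
        intro w hw hne
        rcases mem_frontier_succ.1 hw with ⟨hwf, -⟩ | ⟨q, b', hq, hqlen, hqint, rfl⟩
        · exact huniq w hwf hne
        · have hqv : q ≠ v := fun h => hint (h ▸ ⟨hqlen, hqint⟩)
          have hq0 : y q = 0 :=
            huniq q (Finset.mem_filter.2 ⟨hq, Or.inl hqlen⟩) hqv
          exact hzero q hq hqint hq0 b'
  constructor
  · intro p hp
    obtain ⟨v, _, hv1, huniq⟩ := key p.length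
    have hpf : p ∈ frontier T p.length := Finset.mem_filter.2 ⟨hp, Or.inl rfl⟩
    by_cases h : p = v
    · exact Or.inr (h ▸ hv1)
    · exact Or.inl (huniq p hpf h)
  · obtain ⟨v, hv, hv1, huniq⟩ := key (height T + 1)
    have hvf := Finset.mem_filter.1 hv
    have hvlen : v.length ≤ height T := length_le_height hvf.1
    have hvleaf : v ∈ T.leaves := by
      rcases hvf.2 with h | ⟨-, h⟩
      · omega
      · exact leaf_of_not_internal hvf.1 h
    refine ⟨v, ⟨hvleaf, hv1⟩, ?_⟩
    rintro w ⟨hwleaf, hw1⟩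
    by_contra hne
    have hwn : w ∈ T.nodes := leaves_subset_nodes hwleaf
    have hwmem : w ∈ frontier T (height T + 1) := Finset.mem_filter.2
      ⟨hwn, Or.inr ⟨by have := length_le_height hwn; omega, not_internal_of_leaf hwleaf⟩⟩
    have := huniq w hwmem hne
    linarith
end
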